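/- If w is a 1432-avoiding permutation in S_n with w not equal to the longest permutation, and r is the smallest index with w_r < w_{r+1}, then the permutation w·s_r (obtained by swapping the values in positions r and r+1) is also 1432-avoiding. -/
import Mathlib


/-- `w` avoids the pattern 1432: there are no indices `i₁ < i₂ < i₃ < i₄` with
`w i₁ < w i₄ < w i₃ < w i₂`. -/
def Avoids1432 {n : ℕ} (w : Equiv.Perm (Fin n)) : Prop :=
  ¬ ∃ i1 i2 i3 i4 : Fin n, i1 < i2 ∧ i2 < i3 ∧ i3 < i4 ∧
      w i1 < w i4 ∧ w i4 < w i3 ∧ w i3 < w i2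

/-- If `w` is a 1432-avoiding permutation, not the longest permutation, and `r`
is its first ascent, then `w·s_r` is also 1432-avoiding. (Positions are 0-based.) -/
theorem stmt0 {n : ℕ} (w : Equiv.Perm (Fin n)) (hw : Avoids1432 w)
    (hw0 : w ≠ Fin.revPerm)
    (r : ℕ) (hr : r + 1 < n)
    (hasc : w ⟨r, by omega⟩ < w ⟨r + 1, hr⟩)
    (hmin : ∀ s : ℕ, ∀ hs : s < r, w ⟨s + 1, by omega⟩ < w ⟨s, by omega⟩) :
    Avoids1432 (w * Equiv.swap (⟨r, by omega⟩ : Fin n) ⟨r + 1, hr⟩) := by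
  set R : Fin n := ⟨r, by omega⟩ with hRdef
  set R1 : Fin n := ⟨r + 1, hr⟩ with hR1def
  -- w is strictly decreasing on positions 0..r
  have dec : ∀ (b a : ℕ) (hab : a < b) (hbr : b ≤ r), w ⟨b, by omega⟩ < w ⟨a, by omega⟩ := by
    intro b
    induction b with
    | zero => intro a ha _; exact absurd ha (Nat.not_lt_zero a)
    | succ b ih =>
      intro a ha hb
      have h1 : w ⟨b + 1, by omega⟩ < w ⟨b, by omega⟩ := hmin b (by omega)
      rcases Nat.lt_or_ge a b with h | h
      · exact h1.trans (ih a h (by omega))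
      · have hab : a = b := by omega
        subst hab; exact h1
  -- value of the swap on coordinates
  have sval : ∀ x : Fin n, ((Equiv.swap R R1 x : Fin n) : ℕ) =
      if (x : ℕ) = r then r + 1 else if (x : ℕ) = r + 1 then r else (x : ℕ) := by
    intro x
    rcases eq_or_ne x R with rfl | hxR
    · rw [Equiv.swap_apply_left]
      simp [hRdef, hR1def]
    · rcases eq_or_ne x R1 with rfl | hxR1
      · rw [Equiv.swap_apply_right]
        simp [hRdef, hR1def]
      · rw [Equiv.swap_apply_of_ne_of_ne hxR hxR1]
        have h1 : (x : ℕ) ≠ r := fun h => hxR (Fin.ext h)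
        have h2 : (x : ℕ) ≠ r + 1 := fun h => hxR1 (Fin.ext h)
        simp [h1, h2]
  have key : ∀ a b : Fin n, a < b → ¬(a = R ∧ b = R1) →
      Equiv.swap R R1 a < Equiv.swap R R1 b := by
    intro a b hab hnot
    have ha := sval a
    have hb := sval b
    rw [Fin.lt_def] at hab ⊢
    have hne : ¬((a : ℕ) = r ∧ (b : ℕ) = r + 1) := fun ⟨h1, h2⟩ =>
      hnot ⟨Fin.ext h1, Fin.ext h2⟩
    split_ifs at ha hb <;> omega
  rintro ⟨i1, i2, i3, i4, h12, h23, h34, hv1, hv2, hv3⟩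
  simp only [Equiv.Perm.mul_apply] at hv1 hv2 hv3
  -- swap fixes points with value ≠ r, r+1
  have sfix : ∀ x : Fin n, (x : ℕ) < r → Equiv.swap R R1 x = x := by
    intro x hx
    exact Equiv.swap_apply_of_ne_of_ne
      (fun h => by rw [h] at hx; simp only [hRdef] at hx; omega)
      (fun h => by rw [h] at hx; simp only [hR1def] at hx; omega)
  by_cases h12c : i1 = R ∧ i2 = R1
  · -- pattern would force w(r+1) < w(r), contradicting the ascent
    obtain ⟨e1, e2⟩ := h12c
    subst e1; subst e2
    have hlt : w (Equiv.swap R R1 R) < w (Equiv.swap R R1 R1) :=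
      hv1.trans (hv2.trans hv3)
    rw [Equiv.swap_apply_left, Equiv.swap_apply_right] at hlt
    exact absurd hasc (not_lt.mpr hlt.le)
  · by_cases h23c : i2 = R ∧ i3 = R1
    · obtain ⟨e2, e3⟩ := h23c
      subst e2; subst e3
      have hi1 : (i1 : ℕ) < r := h12
      have hlt : w (Equiv.swap R R1 i1) < w (Equiv.swap R R1 R1) := hv1.trans hv2
      rw [Equiv.swap_apply_right, sfix i1 hi1] at hlt
      exact absurd hlt (not_lt.mpr (dec r (i1 : ℕ) hi1 le_rfl).le)
    · by_cases h34c : i3 = R ∧ i4 = R1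
      · obtain ⟨e3, e4⟩ := h34c
        subst e3; subst e4
        have hi2 : (i2 : ℕ) < r := h23
        have hi1 : (i1 : ℕ) < r := lt_trans h12 hi2
        have hlt : w (Equiv.swap R R1 i1) < w (Equiv.swap R R1 i2) :=
          hv1.trans (hv2.trans hv3)
        rw [sfix i1 hi1, sfix i2 hi2] at hlt
        exact absurd hlt (not_lt.mpr (dec (i2 : ℕ) (i1 : ℕ) h12 hi2.le).le)
      · exact hw ⟨Equiv.swap R R1 i1, Equiv.swap R R1 i2, Equiv.swap R R1 i3,
          Equiv.swap R R1 i4, key i1 i2 h12 h12c, key i2 i3 h23 h23c,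
          key i3 i4 h34 h34c, hv1, hv2, hv3⟩
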